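/- Let γ > 0 and let ξ₁, ξ₂ be continuous real-valued functions on the closure of Ω with |ξ_i(x)| ≤ 1 for all x in the closure of Ω and ∫_Ω g(ξ_i(x)) dx ≥ γ for i = 1, 2. Then for every x in the closure of Ω, |λ_{ξ₁} g(ξ₁(x)) − λ_{ξ₂} g(ξ₂(x))| ≤ C_γ · sup_{y∈closure(Ω)} |ξ₁(y) − ξ₂(y)|, where C_γ = 4|Ω|/γ + 2|Ω|²/γ². -/

import Mathlib

open MeasureTheory

set_option maxHeartbeats 1000000 in
/-- Lipschitz-type bound for the map ξ ↦ λ_ξ g(ξ): if |ξᵢ| ≤ 1 on the closure of Ω and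
∫_Ω g(ξᵢ) ≥ γ > 0 for i = 1,2, then for every x in the closure of Ω,
|λ_{ξ₁} g(ξ₁(x)) − λ_{ξ₂} g(ξ₂(x))| ≤ C_γ · sup_{closure Ω} |ξ₁ − ξ₂| with
C_γ = 4|Ω|/γ + 2|Ω|²/γ², where f(x) = x − x³, g(x) = 1 − x² and
λ_ξ = (∫_Ω f(ξ)) / (∫_Ω g(ξ)). -/
theorem stmt_12 (d : ℕ) (hd : 1 ≤ d) (Ω : Set (Fin d → ℝ))
    (hne : Ω.Nonempty) (hopen : IsOpen Ω) (hconn : IsConnected Ω)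
    (hbdd : Bornology.IsBounded Ω) (hvol : volume Ω < ⊤)
    (γ : ℝ) (hγ : γ > 0)
    (ξ₁ ξ₂ : (Fin d → ℝ) → ℝ)
    (hcont₁ : ContinuousOn ξ₁ (closure Ω)) (hcont₂ : ContinuousOn ξ₂ (closure Ω))
    (hbound₁ : ∀ x ∈ closure Ω, |ξ₁ x| ≤ 1) (hbound₂ : ∀ x ∈ closure Ω, |ξ₂ x| ≤ 1)
    (hγ₁ : γ ≤ ∫ x in Ω, (1 - ξ₁ x ^ 2)) (hγ₂ : γ ≤ ∫ x in Ω, (1 - ξ₂ x ^ 2)) :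
    ∀ x ∈ closure Ω,
      |((∫ y in Ω, (ξ₁ y - ξ₁ y ^ 3)) / ∫ y in Ω, (1 - ξ₁ y ^ 2)) * (1 - ξ₁ x ^ 2) -
        ((∫ y in Ω, (ξ₂ y - ξ₂ y ^ 3)) / ∫ y in Ω, (1 - ξ₂ y ^ 2)) * (1 - ξ₂ x ^ 2)| ≤
        (4 * (volume Ω).toReal / γ + 2 * (volume Ω).toReal ^ 2 / γ ^ 2) *
          ⨆ y ∈ closure Ω, |ξ₁ y - ξ₂ y| := by
  intro x hx
  set V : ℝ := (volume Ω).toReal with hVdef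
  have hV : 0 ≤ V := ENNReal.toReal_nonneg
  set M : ℝ := ⨆ y ∈ closure Ω, |ξ₁ y - ξ₂ y| with hMdef
  -- pointwise lipschitz / boundedness facts
  have hf_lip : ∀ a b : ℝ, |a| ≤ 1 → |b| ≤ 1 →
      |(a - a ^ 3) - (b - b ^ 3)| ≤ 2 * |a - b| := by
    intro a b ha hb
    have h : (a - a ^ 3) - (b - b ^ 3) = (a - b) * (1 - (a ^ 2 + a * b + b ^ 2)) := by ring
    rw [h, abs_mul, mul_comm]
    have h2 : |1 - (a ^ 2 + a * b + b ^ 2)| ≤ 2 := by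
      rw [abs_le] at *
      constructor <;> nlinarith [ha.1, ha.2, hb.1, hb.2]
    exact mul_le_mul_of_nonneg_right h2 (abs_nonneg _)
  have hg_lip : ∀ a b : ℝ, |a| ≤ 1 → |b| ≤ 1 →
      |(1 - a ^ 2) - (1 - b ^ 2)| ≤ 2 * |a - b| := by
    intro a b ha hb
    have h : (1 - a ^ 2) - (1 - b ^ 2) = (a - b) * (-(a + b)) := by ring
    rw [h, abs_mul, mul_comm]
    have h2 : |-(a + b)| ≤ 2 := by
      rw [abs_le] at *
      constructor <;> nlinarith [ha.1, ha.2, hb.1, hb.2]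
    exact mul_le_mul_of_nonneg_right h2 (abs_nonneg _)
  have hf_bd : ∀ a : ℝ, |a| ≤ 1 → |a - a ^ 3| ≤ 1 := by
    intro a ha
    have h : a - a ^ 3 = a * (1 - a ^ 2) := by ring
    rw [h, abs_mul]
    have h2 : |1 - a ^ 2| ≤ 1 := by
      rw [abs_le] at *
      constructor <;> nlinarith [ha.1, ha.2]
    calc |a| * |1 - a ^ 2| ≤ 1 * 1 :=
          mul_le_mul ha h2 (abs_nonneg _) zero_le_one
      _ = 1 := by ring
  have hg_bd : ∀ a : ℝ, |a| ≤ 1 → |1 - a ^ 2| ≤ 1 := by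
    intro a ha
    rw [abs_le] at *
    constructor <;> nlinarith [ha.1, ha.2]
  -- M facts
  have hdiff_bd : ∀ y, (⨆ _ : y ∈ closure Ω, |ξ₁ y - ξ₂ y|) ≤ 2 := by
    intro y
    apply Real.iSup_le _ (by norm_num)
    intro hy
    calc |ξ₁ y - ξ₂ y| ≤ |ξ₁ y| + |ξ₂ y| := abs_sub _ _
      _ ≤ 2 := by linarith [hbound₁ y hy, hbound₂ y hy]
  have hM : ∀ y ∈ closure Ω, |ξ₁ y - ξ₂ y| ≤ M := by
    intro y hy
    have h1 : (⨆ _ : y ∈ closure Ω, |ξ₁ y - ξ₂ y|) ≤ M :=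
      le_ciSup (f := fun z => ⨆ _ : z ∈ closure Ω, |ξ₁ z - ξ₂ z|)
        ⟨2, by rintro _ ⟨z, rfl⟩; exact hdiff_bd z⟩ y
    rwa [ciSup_pos hy] at h1
  have hMnn : 0 ≤ M := le_trans (abs_nonneg _) (hM x hx)
  -- integrability
  have hK : IsCompact (closure Ω) :=
    Metric.isCompact_of_isClosed_isBounded isClosed_closure hbdd.closure
  have integ : ∀ h : (Fin d → ℝ) → ℝ, ContinuousOn h (closure Ω) →
      IntegrableOn h Ω volume := fun h hc =>
    (hc.integrableOn_compact hK).mono_set subset_closure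
  have hif₁ : IntegrableOn (fun y => ξ₁ y - ξ₁ y ^ 3) Ω volume :=
    integ _ (hcont₁.sub (hcont₁.pow 3))
  have hif₂ : IntegrableOn (fun y => ξ₂ y - ξ₂ y ^ 3) Ω volume :=
    integ _ (hcont₂.sub (hcont₂.pow 3))
  have hig₁ : IntegrableOn (fun y => 1 - ξ₁ y ^ 2) Ω volume :=
    integ _ (continuousOn_const.sub (hcont₁.pow 2))
  have hig₂ : IntegrableOn (fun y => 1 - ξ₂ y ^ 2) Ω volume :=
    integ _ (continuousOn_const.sub (hcont₂.pow 2))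
  set F₁ : ℝ := ∫ y in Ω, (ξ₁ y - ξ₁ y ^ 3) with hF₁def
  set F₂ : ℝ := ∫ y in Ω, (ξ₂ y - ξ₂ y ^ 3) with hF₂def
  set G₁ : ℝ := ∫ y in Ω, (1 - ξ₁ y ^ 2) with hG₁def
  set G₂ : ℝ := ∫ y in Ω, (1 - ξ₂ y ^ 2) with hG₂def
  have hG₁pos : 0 < G₁ := lt_of_lt_of_le hγ hγ₁
  have hG₂pos : 0 < G₂ := lt_of_lt_of_le hγ hγ₂
  -- integral bounds
  have hsub : ∀ y ∈ Ω, y ∈ closure Ω := fun y hy => subset_closure hy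
  have hF₁bd : |F₁| ≤ V := by
    have := norm_setIntegral_le_of_norm_le_const (μ := volume) (s := Ω)
      (f := fun y => ξ₁ y - ξ₁ y ^ 3) hvol
      (fun y hy => by simpa using hf_bd (ξ₁ y) (hbound₁ y (hsub y hy)))
    rw [hF₁def, ← Real.norm_eq_abs]
    simpa [Measure.real] using this
  have hF₂bd : |F₂| ≤ V := by
    have := norm_setIntegral_le_of_norm_le_const (μ := volume) (s := Ω)
      (f := fun y => ξ₂ y - ξ₂ y ^ 3) hvol
      (fun y hy => by simpa using hf_bd (ξ₂ y) (hbound₂ y (hsub y hy)))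
    rw [hF₂def, ← Real.norm_eq_abs]
    simpa [Measure.real] using this
  have hFd : |F₁ - F₂| ≤ 2 * M * V := by
    have heq : F₁ - F₂ = ∫ y in Ω, ((ξ₁ y - ξ₁ y ^ 3) - (ξ₂ y - ξ₂ y ^ 3)) :=
      (integral_sub hif₁ hif₂).symm
    rw [heq]
    have hC : ∀ y ∈ Ω, ‖(ξ₁ y - ξ₁ y ^ 3) - (ξ₂ y - ξ₂ y ^ 3)‖ ≤ 2 * M := by
      intro y hy
      have h1 := hf_lip (ξ₁ y) (ξ₂ y) (hbound₁ y (hsub y hy)) (hbound₂ y (hsub y hy))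
      have h2 := hM y (hsub y hy)
      rw [Real.norm_eq_abs]
      linarith
    have := norm_setIntegral_le_of_norm_le_const (μ := volume) (s := Ω)
      (f := fun y => (ξ₁ y - ξ₁ y ^ 3) - (ξ₂ y - ξ₂ y ^ 3)) (C := 2 * M) hvol hC
    rw [← Real.norm_eq_abs]
    exact this
  have hGd : |G₁ - G₂| ≤ 2 * M * V := by
    have heq : G₁ - G₂ = ∫ y in Ω, ((1 - ξ₁ y ^ 2) - (1 - ξ₂ y ^ 2)) :=
      (integral_sub hig₁ hig₂).symm
    rw [heq]
    have hC : ∀ y ∈ Ω, ‖(1 - ξ₁ y ^ 2) - (1 - ξ₂ y ^ 2)‖ ≤ 2 * M := by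
      intro y hy
      have h1 := hg_lip (ξ₁ y) (ξ₂ y) (hbound₁ y (hsub y hy)) (hbound₂ y (hsub y hy))
      have h2 := hM y (hsub y hy)
      rw [Real.norm_eq_abs]
      linarith
    have := norm_setIntegral_le_of_norm_le_const (μ := volume) (s := Ω)
      (f := fun y => (1 - ξ₁ y ^ 2) - (1 - ξ₂ y ^ 2)) (C := 2 * M) hvol hC
    rw [← Real.norm_eq_abs]
    exact this
  -- pointwise values
  have hg₂x : |1 - ξ₂ x ^ 2| ≤ 1 := hg_bd (ξ₂ x) (hbound₂ x hx)
  have hgdx : |(1 - ξ₁ x ^ 2) - (1 - ξ₂ x ^ 2)| ≤ 2 * M := by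
    have h1 := hg_lip (ξ₁ x) (ξ₂ x) (hbound₁ x hx) (hbound₂ x hx)
    have h2 := hM x hx
    linarith
  -- key algebraic identity
  have key : F₁ / G₁ * (1 - ξ₁ x ^ 2) - F₂ / G₂ * (1 - ξ₂ x ^ 2) =
      F₁ / G₁ * ((1 - ξ₁ x ^ 2) - (1 - ξ₂ x ^ 2)) +
      (F₁ - F₂) / G₁ * (1 - ξ₂ x ^ 2) +
      F₂ * (G₂ - G₁) / (G₁ * G₂) * (1 - ξ₂ x ^ 2) := by
    field_simp
    ring
  rw [key]
  have t1 : |F₁ / G₁ * ((1 - ξ₁ x ^ 2) - (1 - ξ₂ x ^ 2))| ≤ V / γ * (2 * M) := by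
    rw [abs_mul, abs_div, abs_of_pos hG₁pos]
    gcongr <;> first | exact hF₁bd | exact hγ₁ | exact hgdx
  have t2 : |(F₁ - F₂) / G₁ * (1 - ξ₂ x ^ 2)| ≤ 2 * M * V / γ * 1 := by
    rw [abs_mul, abs_div, abs_of_pos hG₁pos]
    gcongr <;> first | exact hFd | exact hγ₁ | exact hg₂x
  have t3 : |F₂ * (G₂ - G₁) / (G₁ * G₂) * (1 - ξ₂ x ^ 2)| ≤
      V * (2 * M * V) / (γ * γ) * 1 := by
    rw [abs_mul, abs_div, abs_mul, abs_of_pos (mul_pos hG₁pos hG₂pos)]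
    have hGd' : |G₂ - G₁| ≤ 2 * M * V := by rwa [abs_sub_comm]
    gcongr <;>
      first
        | exact hF₂bd
        | exact hGd'
        | exact mul_le_mul hγ₁ hγ₂ hγ.le (le_trans hγ.le hγ₁)
        | exact hg₂x
  calc |F₁ / G₁ * ((1 - ξ₁ x ^ 2) - (1 - ξ₂ x ^ 2)) +
      (F₁ - F₂) / G₁ * (1 - ξ₂ x ^ 2) +
      F₂ * (G₂ - G₁) / (G₁ * G₂) * (1 - ξ₂ x ^ 2)|
      ≤ |F₁ / G₁ * ((1 - ξ₁ x ^ 2) - (1 - ξ₂ x ^ 2))| +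
        |(F₁ - F₂) / G₁ * (1 - ξ₂ x ^ 2)| +
        |F₂ * (G₂ - G₁) / (G₁ * G₂) * (1 - ξ₂ x ^ 2)| := abs_add_three _ _ _
    _ ≤ V / γ * (2 * M) + 2 * M * V / γ * 1 + V * (2 * M * V) / (γ * γ) * 1 := by
        linarith
    _ = (4 * V / γ + 2 * V ^ 2 / γ ^ 2) * M := by ring
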